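/- arXiv:0808.2274 — 5 statements merged into one kernel-verified Lean document; each statement's English description precedes it below -/
import Mathlib

section
/- Let C, ε > 0 and let f : (-ε, 1+ε) → ℝ be a non-constant real analytic function such that f'(s)² ≤ C·f''(s) for all s ∈ [0,1]. Then f is strictly convex on (0,1). -/
open Set

lemma const_of_deriv_zero_on {s : Set ℝ} (hs : Convex ℝ s) (ho : IsOpen s) {g : ℝ → ℝ}
    (hd : DifferentiableOn ℝ g s) (h0 : ∀ x ∈ s, deriv g x = 0) {x y : ℝ}
    (hx : x ∈ s) (hy : y ∈ s) : g x = g y := by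
  apply hs.is_const_of_fderivWithin_eq_zero hd ?_ hx hy
  intro z hz
  have hdz : DifferentiableAt ℝ g z := (hd z hz).differentiableAt (ho.mem_nhds hz)
  rw [fderivWithin_of_isOpen ho hz]
  have h1 : HasDerivAt g 0 z := by
    have := hdz.hasDerivAt
    rwa [h0 z hz] at this
  have h2 : HasFDerivAt g ((1 : ℝ →L[ℝ] ℝ).smulRight (0 : ℝ)) z := h1
  have h3 : ((1 : ℝ →L[ℝ] ℝ).smulRight (0 : ℝ)) = 0 := by ext; simp
  rw [h3] at h2
  exact h2.fderiv

theorem strictly_convex_of_deriv_sq_le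
    (C ε : ℝ) (hC : 0 < C) (hε : 0 < ε) (f : ℝ → ℝ)
    (hf : AnalyticOn ℝ f (Ioo (-ε) (1 + ε)))
    (hnc : ¬ ∃ c : ℝ, ∀ s ∈ Ioo (-ε) (1 + ε), f s = c)
    (hineq : ∀ s ∈ Icc (0 : ℝ) 1, (deriv f s) ^ 2 ≤ C * deriv (deriv f) s) :
    StrictConvexOn ℝ (Ioo (0 : ℝ) 1) f := by
  have hIo : IsOpen (Ioo (-ε) (1 + ε)) := isOpen_Ioo
  have hconv : Convex ℝ (Ioo (-ε) (1 + ε)) := convex_Ioo _ _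
  have hfN : AnalyticOnNhd ℝ f (Ioo (-ε) (1 + ε)) :=
    (hIo.analyticOn_iff_analyticOnNhd).1 hf
  have hf1 : AnalyticOnNhd ℝ (deriv f) (Ioo (-ε) (1 + ε)) := hfN.deriv
  have hf2 : AnalyticOnNhd ℝ (deriv (deriv f)) (Ioo (-ε) (1 + ε)) := hf1.deriv
  have hsub : Icc (0 : ℝ) 1 ⊆ Ioo (-ε) (1 + ε) := fun x hx =>
    ⟨lt_of_lt_of_le (by linarith) hx.1, lt_of_le_of_lt hx.2 (by linarith)⟩
  have hsub' : Ioo (0 : ℝ) 1 ⊆ Ioo (-ε) (1 + ε) :=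
    (Ioo_subset_Icc_self).trans hsub
  have h0I : (0 : ℝ) ∈ Ioo (-ε) (1 + ε) := ⟨by linarith, by linarith⟩
  have h2nonneg : ∀ s ∈ Icc (0 : ℝ) 1, 0 ≤ deriv (deriv f) s := fun s hs => by
    nlinarith [hineq s hs, sq_nonneg (deriv f s)]
  -- f'' is not identically zero on the interval
  have hne : ¬ ∀ s ∈ Ioo (-ε) (1 + ε), deriv (deriv f) s = 0 := by
    intro hzero
    have hcd : ∀ x ∈ Ioo (-ε) (1 + ε), ∀ y ∈ Ioo (-ε) (1 + ε), deriv f x = deriv f y :=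
      fun x hx y hy => const_of_deriv_zero_on hconv hIo hf1.differentiableOn hzero hx hy
    have h00 : deriv f 0 = 0 := by
      have h1 := hineq 0 (by constructor <;> norm_num)
      rw [hzero 0 h0I] at h1
      nlinarith [sq_nonneg (deriv f 0)]
    have hd0 : ∀ x ∈ Ioo (-ε) (1 + ε), deriv f x = 0 := fun x hx => by
      rw [hcd x hx 0 h0I, h00]
    exact hnc ⟨f 0, fun s hs =>
      const_of_deriv_zero_on hconv hIo hfN.differentiableOn hd0 hs h0I⟩
  -- deriv f is monotone on [0,1]
  have hmono : MonotoneOn (deriv f) (Icc (0 : ℝ) 1) := by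
    apply monotoneOn_of_deriv_nonneg (convex_Icc 0 1)
      (hf1.continuousOn.mono hsub)
    · rw [interior_Icc]
      exact (hf1.differentiableOn.mono ((Ioo_subset_Icc_self).trans hsub))
    · rw [interior_Icc]
      intro x hx
      exact h2nonneg x (Ioo_subset_Icc_self hx)
  -- deriv f is strictly monotone on (0,1)
  have hsm : StrictMonoOn (deriv f) (Ioo (0 : ℝ) 1) := by
    intro x hx y hy hxy
    rcases lt_or_eq_of_le (hmono (Ioo_subset_Icc_self hx) (Ioo_subset_Icc_self hy) hxy.le)
      with h | h
    · exact h
    · exfalso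
      -- deriv f is constant on [x, y]
      have hconst : ∀ z ∈ Icc x y, deriv f z = deriv f x := by
        intro z hz
        have hzI : z ∈ Icc (0 : ℝ) 1 :=
          ⟨hx.1.le.trans hz.1, hz.2.trans hy.2.le⟩
        exact le_antisymm (h ▸ hmono hzI (Ioo_subset_Icc_self hy) hz.2)
          (hmono (Ioo_subset_Icc_self hx) hzI hz.1)
      -- hence f'' vanishes on (x, y)
      have hzero : ∀ z ∈ Ioo x y, deriv (deriv f) z = 0 := by
        intro z hz
        have hev : deriv f =ᶠ[nhds z] (fun _ => deriv f x) := by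
          filter_upwards [Ioo_mem_nhds hz.1 hz.2] with w hw
          exact hconst w (Ioo_subset_Icc_self hw)
        rw [hev.deriv_eq, deriv_const]
      set z₀ : ℝ := (x + y) / 2 with hz₀
      have hz₀mem : z₀ ∈ Ioo x y := ⟨by simp [hz₀]; linarith, by simp [hz₀]; linarith⟩
      have hz₀I : z₀ ∈ Ioo (-ε) (1 + ε) :=
        hsub' ⟨hx.1.trans hz₀mem.1, hz₀mem.2.trans hy.2⟩
      have hev0 : deriv (deriv f) =ᶠ[nhds z₀] 0 := by
        filter_upwards [Ioo_mem_nhds hz₀mem.1 hz₀mem.2] with w hw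
        exact hzero w hw
      have := hf2.eqOn_zero_of_preconnected_of_eventuallyEq_zero
        (isPreconnected_Ioo) hz₀I hev0
      exact hne fun s hs => this hs
  have hint : interior (Ioo (0 : ℝ) 1) = Ioo (0 : ℝ) 1 := isOpen_Ioo.interior_eq
  exact StrictMonoOn.strictConvexOn_of_deriv (convex_Ioo 0 1)
    (hfN.continuousOn.mono hsub') (by rw [hint]; exact hsm)
end

section
/- For a,b in a Banach algebra, e^{a+b} - e^a = ∫₀¹ e^{(1-t)a} b e^{t(a+b)} dt. -/
open NormedSpace intervalIntegral

theorem exp_sub_exp_eq_integral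
    {A : Type*} [NormedRing A] [NormedAlgebra ℝ A] [CompleteSpace A] (a b : A) :
    exp (a + b) - exp a =
      ∫ t in (0 : ℝ)..1, exp ((1 - t) • a) * b * exp (t • (a + b)) := by
  have key : ∀ t : ℝ, HasDerivAt
      (fun t : ℝ => exp ((1 - t) • a) * exp (t • (a + b)))
      (exp ((1 - t) • a) * b * exp (t • (a + b))) t := by
    intro t
    have h1 : HasDerivAt (fun t : ℝ => exp ((1 - t) • a))
        (-(exp ((1 - t) • a) * a)) t := by
      have hs : HasDerivAt (fun t : ℝ => 1 - t) (-1) t := by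
        simpa using (hasDerivAt_id t).const_sub 1
      have := (hasDerivAt_exp_smul_const (𝕂 := ℝ) a (1 - t)).scomp t hs
      simpa [mul_neg, Function.comp_def] using this
    have h2 : HasDerivAt (fun t : ℝ => exp (t • (a + b)))
        ((a + b) * exp (t • (a + b))) t :=
      hasDerivAt_exp_smul_const' (a + b) t
    have := h1.mul h2
    convert this using 1
    · rfl
    noncomm_ring
  have hcont : Continuous fun t : ℝ =>
      exp ((1 - t) • a) * b * exp (t • (a + b)) := by
    exact (((continuous_iff_continuousAt.2 fun x => (exp_analytic (𝕂 := ℝ) x).continuousAt).comp (by fun_prop : Continuous fun t : ℝ => (1 - t) • a)).mul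
      continuous_const).mul ((continuous_iff_continuousAt.2 fun x => (exp_analytic (𝕂 := ℝ) x).continuousAt).comp (by fun_prop : Continuous fun t : ℝ => t • (a + b)))
  have := intervalIntegral.integral_eq_sub_of_hasDerivAt
    (fun t _ => key t) (hcont.intervalIntegrable 0 1)
  simp only [one_smul, zero_smul, sub_self, exp_zero, one_mul, mul_one, sub_zero] at this
  rw [this]
end

section
/- In a unital Banach algebra, the directional derivative of the exponential map at a in direction b equals ∫₀¹ e^{(1-t)a} b e^{ta} dt, i.e. lim_{s→0} (e^{a+sb} - e^a)/s = ∫₀¹ e^{(1-t)a} b e^{ta} dt. -/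
open NormedSpace Filter

lemma duhamel_aux {A : Type*} [NormedRing A] [NormedAlgebra ℝ A] [CompleteSpace A]
    (a b : A) (s : ℝ) :
    exp (a + s • b) - exp a
      = s • ∫ t in (0 : ℝ)..1, exp ((1 - t) • a) * b * exp (t • (a + s • b)) := by
  set c : A := a + s • b with hc
  have hderiv : ∀ t ∈ Set.uIcc (0 : ℝ) 1,
      HasDerivAt (fun t : ℝ => exp ((1 - t) • a) * exp (t • c))
        (exp ((1 - t) • a) * (s • b) * exp (t • c)) t := by
    intro t _
    have h1 : HasDerivAt (fun t : ℝ => exp ((1 - t) • a))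
        ((-1 : ℝ) • (exp ((1 - t) • a) * a)) t := by
      have hinner : HasDerivAt (fun t : ℝ => (1 : ℝ) - t) (-1) t := by
        simpa using (hasDerivAt_id t).const_sub 1
      exact (hasDerivAt_exp_smul_const a ((1 : ℝ) - t)).scomp t hinner
    have h2 : HasDerivAt (fun t : ℝ => exp (t • c)) (c * exp (t • c)) t :=
      hasDerivAt_exp_smul_const' c t
    have := h1.mul h2
    convert this using 1
    · rfl
    rw [hc]
    set p := exp ((1 - t) • a)
    set q := exp (t • (a + s • b))
    simp only [neg_one_smul]
    noncomm_ring
  have hcont : Continuous fun t : ℝ => exp ((1 - t) • a) * (s • b) * exp (t • c) := by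
    have e1 : Continuous fun t : ℝ => exp ((1 - t) • a) :=
      (@exp_continuous A _ (NormedAlgebra.restrictScalars ℚ ℝ A) _).comp ((continuous_const.sub continuous_id).smul continuous_const)
    have e2 : Continuous fun t : ℝ => exp (t • c) :=
      (@exp_continuous A _ (NormedAlgebra.restrictScalars ℚ ℝ A) _).comp (continuous_id.smul continuous_const)
    exact (e1.mul continuous_const).mul e2
  have hFTC := intervalIntegral.integral_eq_sub_of_hasDerivAt hderiv
    (hcont.intervalIntegrable 0 1)
  have hval : (fun t : ℝ => exp ((1 - t) • a) * exp (t • c)) 1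
      - (fun t : ℝ => exp ((1 - t) • a) * exp (t • c)) 0 = exp c - exp a := by
    simp [exp_zero]
  rw [hval] at hFTC
  rw [hc] at *
  rw [← hFTC, ← intervalIntegral.integral_smul]
  congr 1
  ext t
  rw [mul_smul_comm, smul_mul_assoc]

theorem dexp_eq_integral
    {A : Type*} [NormedRing A] [NormedAlgebra ℝ A] [CompleteSpace A] (a b : A) :
    Tendsto (fun s : ℝ => s⁻¹ • (exp (a + s • b) - exp a)) (nhdsWithin 0 {(0 : ℝ)}ᶜ)
      (nhds (∫ t in (0 : ℝ)..1, exp ((1 - t) • a) * b * exp (t • a))) := by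
  set g : ℝ → A := fun s => ∫ t in (0 : ℝ)..1, exp ((1 - t) • a) * b * exp (t • (a + s • b))
    with hg
  have hgcont : Continuous g := by
    apply intervalIntegral.continuous_parametric_intervalIntegral_of_continuous'
    have e1 : Continuous fun p : ℝ × ℝ => exp ((1 - p.2) • a) :=
      (@exp_continuous A _ (NormedAlgebra.restrictScalars ℚ ℝ A) _).comp ((continuous_const.sub continuous_snd).smul continuous_const)
    have e2 : Continuous fun p : ℝ × ℝ => exp (p.2 • (a + p.1 • b)) :=
      (@exp_continuous A _ (NormedAlgebra.restrictScalars ℚ ℝ A) _).comp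
        (continuous_snd.smul (continuous_const.add (continuous_fst.smul continuous_const)))
    exact (e1.mul continuous_const).mul e2
  have hg0 : g 0 = ∫ t in (0 : ℝ)..1, exp ((1 - t) • a) * b * exp (t • a) := by
    simp [hg]
  have htend : Tendsto g (nhdsWithin 0 {(0 : ℝ)}ᶜ) (nhds (g 0)) :=
    (hgcont.tendsto 0).mono_left nhdsWithin_le_nhds
  rw [hg0] at htend
  refine htend.congr' ?_
  filter_upwards [self_mem_nhdsWithin] with s hs
  have hs' : s ≠ 0 := hs
  rw [hg, duhamel_aux a b s, inv_smul_smul₀ hs']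
end

section
/- Let a be an element of a unital Banach algebra with ‖a‖ < π, and let ad a : x ↦ xa - ax. Then the operator F(ad a), where F(z) = (e^z - 1)/z = Σ_{n≥0} z^n/(n+1)!, is invertible as a bounded operator on the algebra. -/
open ContinuousLinearMap Finset Real

private lemma bern_coeff_id (n : ℕ) :
    ∑ p ∈ Finset.HasAntidiagonal.antidiagonal n,
      (bernoulli p.1 / p.1.factorial) * ((p.2 + 1).factorial : ℚ)⁻¹
      = if n = 0 then 1 else 0 := by
  have key : ∀ p ∈ Finset.HasAntidiagonal.antidiagonal n,
      (bernoulli p.1 / p.1.factorial) * ((p.2 + 1).factorial : ℚ)⁻¹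
        = ((n + 1).factorial : ℚ)⁻¹ * (((n+1).choose p.1 : ℚ) * bernoulli p.1) := by
    rintro ⟨i, j⟩ hp
    simp only [Finset.HasAntidiagonal.mem_antidiagonal] at hp
    subst hp
    have hle : i ≤ i + j + 1 := by omega
    rw [Nat.cast_choose ℚ hle]
    have h1 : i + j + 1 - i = j + 1 := by omega
    rw [h1]
    have h2 : (i.factorial : ℚ) ≠ 0 := by positivity
    have h3 : ((j+1).factorial : ℚ) ≠ 0 := by positivity
    have h4 : (((i+j)+1).factorial : ℚ) ≠ 0 := by positivity
    field_simp
  rw [Finset.sum_congr rfl key, ← Finset.mul_sum]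
  have hs := sum_bernoulli (n + 1)
  have hrange : ∑ p ∈ Finset.HasAntidiagonal.antidiagonal n, (((n+1).choose p.1 : ℚ) * bernoulli p.1)
      = ∑ k ∈ range (n+1), ((n+1).choose k : ℚ) * bernoulli k := by
    rw [Finset.Nat.sum_antidiagonal_eq_sum_range_succ_mk]
  rw [hrange, hs]
  rcases n with _ | n
  · norm_num
  · simp

private lemma zeta_sum_le_two {k : ℕ} (hk : k ≠ 0) :
    ((-1 : ℝ) ^ (k + 1) * (2 : ℝ) ^ (2 * k - 1) * π ^ (2 * k) *
        bernoulli (2 * k) / (2 * k).factorial) ≤ 2 ∧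
    0 ≤ ((-1 : ℝ) ^ (k + 1) * (2 : ℝ) ^ (2 * k - 1) * π ^ (2 * k) *
        bernoulli (2 * k) / (2 * k).factorial) := by
  have h := hasSum_zeta_nat hk
  constructor
  · have hle : ∀ n : ℕ, 1 / (n : ℝ) ^ (2 * k) ≤ 1 / (n : ℝ) ^ 2 := by
      intro n
      rcases Nat.eq_zero_or_pos n with rfl | hn
      · simp [pow_eq_zero_iff, hk, Nat.mul_ne_zero]
      · apply one_div_le_one_div_of_le (by positivity)
        exact pow_le_pow_right₀ (by exact_mod_cast hn) (by omega)
    have := hasSum_le hle h hasSum_zeta_two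
    have hpi : π < 3.15 := pi_lt_d2
    nlinarith [pi_pos]
  · exact hasSum_le (fun n => by positivity) hasSum_zero h

private lemma bern_div_fact_le (n : ℕ) :
    |(bernoulli n : ℝ)| / n.factorial ≤ 4 / (2 * π) ^ n := by
  match n with
  | 0 => norm_num
  | 1 =>
      have : (bernoulli 1 : ℝ) = -(1/2) := by rw [bernoulli_one]; push_cast; norm_num
      rw [this, abs_neg, abs_of_nonneg (by norm_num : (0:ℝ) ≤ 1/2)]
      simp only [Nat.factorial_one, Nat.cast_one, div_one, pow_one]
      rw [div_le_div_iff₀ (by norm_num) (by positivity)]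
      nlinarith [pi_le_four, pi_pos]
  | (m + 2) =>
      rcases Nat.even_or_odd (m + 2) with he | ho
      · obtain ⟨k, hk⟩ := he
        have hk1 : k ≠ 0 := by omega
        have hk2 : m + 2 = 2 * k := by omega
        rw [hk2]
        obtain ⟨hv2, hv0⟩ := zeta_sum_le_two hk1
        set B := (bernoulli (2 * k) : ℝ) with hB
        set w := (-1 : ℝ) ^ (k + 1) * B with hw
        have hfact : (0:ℝ) < (2*k).factorial := by positivity
        have hwB : |B| = |w| := by
          rw [hw, abs_mul, abs_pow, abs_neg, abs_one, one_pow, one_mul]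
        have hv : ((-1 : ℝ) ^ (k + 1) * (2 : ℝ) ^ (2 * k - 1) * π ^ (2 * k) *
            B / (2 * k).factorial) = (2 : ℝ) ^ (2 * k - 1) * π ^ (2 * k) * w / (2*k).factorial := by
          rw [hw]; ring
        rw [hv] at hv2 hv0
        have hc : (0:ℝ) < (2 : ℝ) ^ (2 * k - 1) * π ^ (2 * k) := by positivity
        have hw0 : 0 ≤ w := by
          by_contra hneg
          push_neg at hneg
          have : (2 : ℝ) ^ (2 * k - 1) * π ^ (2 * k) * w / (2*k).factorial < 0 :=
            div_neg_of_neg_of_pos (by nlinarith) hfact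
          linarith
        rw [hwB, abs_of_nonneg hw0]
        have hpow : (2 * π) ^ (2 * k) = 2 * ((2 : ℝ) ^ (2 * k - 1) * π ^ (2 * k)) := by
          rw [mul_pow]
          have : (2:ℝ) ^ (2*k) = 2 * (2:ℝ)^(2*k-1) := by
            rw [← pow_succ']
            congr 1
            omega
          rw [this]; ring
        rw [div_le_div_iff₀ hfact (by positivity), hpow]
        rw [div_le_iff₀ hfact] at hv2
        nlinarith
      · have : (bernoulli (m + 2) : ℝ) = 0 := by
          rw [bernoulli_eq_bernoulli'_of_ne_one (by omega),
            bernoulli'_eq_zero_of_odd ho (by omega)]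
          norm_num
        rw [this, abs_zero, zero_div]
        positivity

private lemma coeff_real (n : ℕ) :
    ∑ p ∈ Finset.HasAntidiagonal.antidiagonal n,
      ((bernoulli p.1 : ℝ) / p.1.factorial) * (((p.2 + 1).factorial : ℝ))⁻¹
      = if n = 0 then 1 else 0 := by
  have h := congrArg (Rat.cast : ℚ → ℝ) (bern_coeff_id n)
  push_cast at h
  convert h using 2
  split <;> norm_num

private lemma key_isUnit {B : Type*} [NormedRing B] [NormedSpace ℝ B]
    [IsScalarTower ℝ B B] [SMulCommClass ℝ B B] [CompleteSpace B]
    (T : B) (hT : ‖T‖ < 2 * π) (h1 : ‖(1 : B)‖ ≤ 1) :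
    IsUnit (∑' n : ℕ, (((n + 1).factorial : ℝ))⁻¹ • T ^ n) := by
  have hπ := pi_pos
  have hTn : ∀ n, ‖T ^ n‖ ≤ ‖T‖ ^ n := by
    intro n
    cases n with
    | zero => simpa using h1
    | succ n => exact norm_pow_le' T n.succ_pos
  set b : ℕ → B := fun n => ((bernoulli n : ℝ) / n.factorial) • T ^ n with hb
  set c : ℕ → B := fun n => (((n + 1).factorial : ℝ))⁻¹ • T ^ n with hc
  have hr0 : (0:ℝ) ≤ ‖T‖ / (2 * π) := by positivity
  have hr1 : ‖T‖ / (2 * π) < 1 := (div_lt_one (by positivity)).2 hT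
  have hsb : Summable fun n => ‖b n‖ := by
    apply Summable.of_nonneg_of_le (fun n => norm_nonneg _) (fun n => ?_)
      (((summable_geometric_of_lt_one hr0 hr1).mul_left 4))
    rw [hb, norm_smul, Real.norm_eq_abs, abs_div, abs_of_nonneg (by positivity :
      (0:ℝ) ≤ (n.factorial : ℝ))]
    calc |(bernoulli n : ℝ)| / n.factorial * ‖T ^ n‖
        ≤ (4 / (2 * π) ^ n) * ‖T‖ ^ n :=
          mul_le_mul (bern_div_fact_le n) (hTn n) (norm_nonneg _) (by positivity)
      _ = 4 * (‖T‖ / (2 * π)) ^ n := by rw [div_pow]; ring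
  have hsc : Summable fun n => ‖c n‖ := by
    apply Summable.of_nonneg_of_le (fun n => norm_nonneg _) (fun n => ?_)
      (Real.summable_pow_div_factorial ‖T‖)
    rw [hc, norm_smul, Real.norm_eq_abs, abs_of_nonneg (by positivity :
      (0:ℝ) ≤ (((n+1).factorial : ℝ))⁻¹)]
    have hf1 : ((n.factorial : ℝ))⁻¹ ≤ ((n.factorial : ℝ))⁻¹ := le_refl _
    have hle : (((n+1).factorial : ℝ))⁻¹ ≤ ((n.factorial : ℝ))⁻¹ := by
      apply inv_anti₀ (by positivity)
      exact_mod_cast Nat.factorial_le (by omega)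
    calc (((n+1).factorial : ℝ))⁻¹ * ‖T ^ n‖ ≤ ((n.factorial : ℝ))⁻¹ * ‖T‖ ^ n :=
          mul_le_mul hle (hTn n) (norm_nonneg _) (by positivity)
      _ = ‖T‖ ^ n / n.factorial := by ring
  have hprod : ∀ n : ℕ, ∑ p ∈ Finset.HasAntidiagonal.antidiagonal n, b p.1 * c p.2
      = (if n = 0 then (1:ℝ) else 0) • T ^ n := by
    intro n
    rw [← coeff_real n, Finset.sum_smul]
    apply Finset.sum_congr rfl
    rintro ⟨i, j⟩ hp
    simp only [Finset.HasAntidiagonal.mem_antidiagonal] at hp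
    show b i * c j = _
    rw [hb, hc]
    simp only
    rw [smul_mul_smul_comm, ← pow_add, hp]
  have hprod' : ∀ n : ℕ, ∑ p ∈ Finset.HasAntidiagonal.antidiagonal n, c p.1 * b p.2
      = (if n = 0 then (1:ℝ) else 0) • T ^ n := by
    intro n
    have hswap : ∑ p ∈ Finset.HasAntidiagonal.antidiagonal n, c p.1 * b p.2
        = ∑ p ∈ Finset.HasAntidiagonal.antidiagonal n, b p.1 * c p.2 := by
      rw [← Finset.Nat.sum_antidiagonal_swap (f := fun p => b p.1 * c p.2)]
      apply Finset.sum_congr rfl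
      rintro ⟨i, j⟩ _
      show c i * b j = b j * c i
      rw [hb, hc]
      simp only
      rw [smul_mul_smul_comm, smul_mul_smul_comm, mul_comm ((((i+1).factorial : ℝ))⁻¹),
        ((Commute.refl T).pow_pow i j).eq]
    rw [hswap, hprod]
  have hδ : (∑' n : ℕ, (if n = 0 then (1:ℝ) else 0) • T ^ n) = 1 := by
    rw [tsum_eq_single 0 (by intro n hn; simp [hn])]
    simp
  have h1' : (∑' n, b n) * (∑' n, c n) = 1 := by
    rw [tsum_mul_tsum_eq_tsum_sum_antidiagonal_of_summable_norm hsb hsc,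
      tsum_congr hprod, hδ]
  have h2' : (∑' n, c n) * (∑' n, b n) = 1 := by
    rw [tsum_mul_tsum_eq_tsum_sum_antidiagonal_of_summable_norm hsc hsb,
      tsum_congr hprod', hδ]
  exact ⟨⟨∑' n, c n, ∑' n, b n, h2', h1'⟩, rfl⟩

theorem F_ad_invertible
    {A : Type*} [NormedRing A] [NormedAlgebra ℂ A] [CompleteSpace A]
    (a : A) (ha : ‖a‖ < Real.pi) :
    IsUnit (∑' n : ℕ, (((n + 1).factorial : ℝ))⁻¹ •
      ((ContinuousLinearMap.mul ℂ A).flip a - ContinuousLinearMap.mul ℂ A a) ^ n) := by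
  apply key_isUnit
  · have hflip : ‖(ContinuousLinearMap.mul ℂ A).flip a‖ ≤ ‖a‖ := by
      apply opNorm_le_bound _ (norm_nonneg a)
      intro x
      simp only [flip_apply, mul_apply']
      calc ‖x * a‖ ≤ ‖x‖ * ‖a‖ := norm_mul_le _ _
        _ = ‖a‖ * ‖x‖ := mul_comm _ _
    calc ‖(ContinuousLinearMap.mul ℂ A).flip a - ContinuousLinearMap.mul ℂ A a‖
        ≤ ‖(ContinuousLinearMap.mul ℂ A).flip a‖ + ‖ContinuousLinearMap.mul ℂ A a‖ :=
          norm_sub_le _ _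
      _ ≤ ‖a‖ + ‖a‖ := add_le_add hflip (opNorm_mul_apply_le ℂ A a)
      _ < 2 * π := by linarith
  · simpa [ContinuousLinearMap.one_def] using
      (ContinuousLinearMap.norm_id_le : ‖ContinuousLinearMap.id ℂ A‖ ≤ 1)
end

section
/- Let A = Σ_{i=1}^n λ_i p_i be a self-adjoint operator with finite spectrum, where λ_i are distinct reals and p_i are pairwise orthogonal projections summing to 1. Then the range of the commutator map δ_A(x) = xA - Ax on skew-hermitian Hilbert–Schmidt operators equals {z ∈ B₂(H)_h : p_i z p_i = 0 for all i}, which is a closed subspace of the hermitian Hilbert–Schmidt operators. Moreover ‖δ_A(x)‖₂ ≥ (min_{i≠j} |λ_i - λ_j|) ‖x - P_A(x)‖₂, where P_A(x) = Σ_i p_i x p_i. -/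
open ContinuousLinearMap Finset
open scoped NNReal ENNReal
variable {ι H : Type*} [NormedAddCommGroup H] [InnerProductSpace ℂ H] [CompleteSpace H]

/-- Membership in the Hilbert–Schmidt class, along a fixed Hilbert basis. -/
def IsHS (e : HilbertBasis ι ℂ H) (a : H →L[ℂ] H) : Prop :=
  Summable fun i => ((inner ℂ (e i) ((adjoint a * a) (e i)) : ℂ)).re

/-- The Hilbert–Schmidt norm, computed along a fixed Hilbert basis. -/
noncomputable def hsNorm (e : HilbertBasis ι ℂ H) (a : H →L[ℂ] H) : ℝ :=
  Real.sqrt (∑' i, ((inner ℂ (e i) ((adjoint a * a) (e i)) : ℂ)).re)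

lemma ofReal_norm_eq_coe_nnnorm {E : Type*} [SeminormedAddCommGroup E] (a : E) :
    ENNReal.ofReal ‖a‖ = (‖a‖₊ : ℝ≥0∞) :=
  ENNReal.ofReal_eq_coe_nnreal _

noncomputable def hsT (e : HilbertBasis ι ℂ H) (a : H →L[ℂ] H) : ℝ≥0∞ :=
  ∑' k, ((‖a (e k)‖₊ : ℝ≥0∞))^2

lemma inner_adj_mul (a : H →L[ℂ] H) (v : H) :
    ((inner ℂ v ((adjoint a * a) v) : ℂ)).re = ‖a v‖^2 := by
  rw [ContinuousLinearMap.mul_apply, ContinuousLinearMap.adjoint_inner_right,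
    inner_self_eq_norm_sq_to_K]
  norm_cast

lemma isHS_iff_summable (e : HilbertBasis ι ℂ H) (a : H →L[ℂ] H) :
    IsHS e a ↔ Summable (fun k => ‖a (e k)‖^2) := by
  unfold IsHS
  simp only [inner_adj_mul]

lemma isHS_iff_T (e : HilbertBasis ι ℂ H) (a : H →L[ℂ] H) :
    IsHS e a ↔ hsT e a ≠ ∞ := by
  rw [isHS_iff_summable, hsT]
  have h1 : ∀ k, ((‖a (e k)‖₊ : ℝ≥0∞))^2 = ((‖a (e k)‖₊^2 : ℝ≥0) : ℝ≥0∞) := by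
    intro k; push_cast; ring
  simp only [h1]
  rw [ENNReal.tsum_coe_ne_top_iff_summable]
  constructor
  · intro h
    exact NNReal.summable_coe.mp (by simpa [NNReal.coe_pow, coe_nnnorm] using h)
  · intro h
    have := NNReal.summable_coe.mpr h
    simpa [NNReal.coe_pow, coe_nnnorm] using this

lemma tsum_sq_eq_toReal_T (e : HilbertBasis ι ℂ H) (a : H →L[ℂ] H) :
    (∑' k, ‖a (e k)‖^2) = (hsT e a).toReal := by
  by_cases h : Summable (fun k => ‖a (e k)‖^2)
  · have hT : hsT e a ≠ ∞ := (isHS_iff_T e a).mp ((isHS_iff_summable e a).mpr h)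
    have h1 : ∀ k, ((‖a (e k)‖₊ : ℝ≥0∞))^2 = ENNReal.ofReal (‖a (e k)‖^2) := by
      intro k
      rw [← ofReal_norm_eq_coe_nnnorm, ← ENNReal.ofReal_pow (norm_nonneg _)]
    rw [hsT] at *
    simp only [h1] at *
    rw [← ENNReal.ofReal_tsum_of_nonneg (fun k => sq_nonneg _) h,
      ENNReal.toReal_ofReal (tsum_nonneg (fun k => sq_nonneg _))]
  · have hT : hsT e a = ∞ := by
      by_contra hc
      exact h ((isHS_iff_summable e a).mp ((isHS_iff_T e a).mpr hc))
    rw [tsum_eq_zero_of_not_summable h, hT, ENNReal.toReal_top]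

lemma hsNorm_eq_T (e : HilbertBasis ι ℂ H) (a : H →L[ℂ] H) :
    hsNorm e a = Real.sqrt (hsT e a).toReal := by
  rw [hsNorm]
  simp only [inner_adj_mul]
  rw [tsum_sq_eq_toReal_T]

set_option maxHeartbeats 1000000 in
lemma parseval_hasSum (e : HilbertBasis ι ℂ H) (v : H) :
    HasSum (fun m => ‖(inner ℂ (e m) v : ℂ)‖^2) (‖v‖^2) := by
  have h := e.hasSum_inner_mul_inner v v
  have h2 : HasSum (fun m => ((inner ℂ v (e m) : ℂ) * inner ℂ (e m) v).re) ((inner ℂ v v : ℂ)).re :=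
    Complex.reCLM.hasSum h
  have hfun : (fun m => ((inner ℂ v (e m) : ℂ) * inner ℂ (e m) v).re)
      = (fun m => ‖(inner ℂ (e m) v : ℂ)‖^2) := by
    funext m
    rw [← inner_conj_symm v (e m), ← Complex.normSq_eq_conj_mul_self]
    simp [Complex.normSq_eq_norm_sq]
    norm_cast
  have hval : ((inner ℂ v v : ℂ)).re = ‖v‖^2 := by
    rw [inner_self_eq_norm_sq_to_K]; norm_cast
  rw [hfun, hval] at h2
  exact h2

lemma parseval_ennreal (e : HilbertBasis ι ℂ H) (v : H) :
    (∑' m, ((‖(inner ℂ (e m) v : ℂ)‖₊ : ℝ≥0∞))^2) = (‖v‖₊ : ℝ≥0∞)^2 := by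
  have h := parseval_hasSum e v
  have h1 : ∀ m, ((‖(inner ℂ (e m) v : ℂ)‖₊ : ℝ≥0∞))^2
      = ENNReal.ofReal (‖(inner ℂ (e m) v : ℂ)‖^2) := by
    intro m; rw [← ofReal_norm_eq_coe_nnnorm, ← ENNReal.ofReal_pow (norm_nonneg _)]
  simp only [h1]
  rw [← ENNReal.ofReal_tsum_of_nonneg (fun m => sq_nonneg _) h.summable, h.tsum_eq,
    ENNReal.ofReal_pow (norm_nonneg _), ofReal_norm_eq_coe_nnnorm]

lemma hsT_adjoint (e : HilbertBasis ι ℂ H) (a : H →L[ℂ] H) :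
    hsT e (adjoint a) = hsT e a := by
  have key : ∀ b : H →L[ℂ] H, hsT e b = ∑' k, ∑' m, ((‖(inner ℂ (e m) (b (e k)) : ℂ)‖₊ : ℝ≥0∞))^2 := by
    intro b
    unfold hsT
    congr 1
    funext k
    rw [← parseval_ennreal e (b (e k))]
  rw [key, key a, ENNReal.tsum_comm]
  apply tsum_congr; intro k
  apply tsum_congr; intro m
  have h2 : (inner ℂ (e k) ((adjoint a) (e m)) : ℂ)
      = (starRingEnd ℂ) (inner ℂ (e m) (a (e k)) : ℂ) := by
    rw [ContinuousLinearMap.adjoint_inner_right, ← inner_conj_symm]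
  rw [h2, RCLike.nnnorm_conj]

lemma hsT_mul_le (e : HilbertBasis ι ℂ H) (b a : H →L[ℂ] H) :
    hsT e (b * a) ≤ (‖b‖₊ : ℝ≥0∞)^2 * hsT e a := by
  unfold hsT
  rw [← ENNReal.tsum_mul_left]
  apply ENNReal.tsum_le_tsum
  intro k
  rw [ContinuousLinearMap.mul_apply]
  calc (‖b (a (e k))‖₊ : ℝ≥0∞)^2 ≤ ((‖b‖₊ * ‖a (e k)‖₊ : ℝ≥0))^2 := by
        gcongr
        exact_mod_cast b.le_opNorm _
    _ = (‖b‖₊ : ℝ≥0∞)^2 * (‖a (e k)‖₊ : ℝ≥0∞)^2 := by push_cast; ring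

lemma hsT_smul (e : HilbertBasis ι ℂ H) (c : ℂ) (a : H →L[ℂ] H) :
    hsT e (c • a) = (‖c‖₊ : ℝ≥0∞)^2 * hsT e a := by
  unfold hsT
  rw [← ENNReal.tsum_mul_left]
  congr 1
  funext k
  simp only [ContinuousLinearMap.smul_apply, nnnorm_smul]
  push_cast; ring

lemma hsT_add_le (e : HilbertBasis ι ℂ H) (a b : H →L[ℂ] H) :
    hsT e (a + b) ≤ 2 * hsT e a + 2 * hsT e b := by
  unfold hsT
  rw [← ENNReal.tsum_mul_left, ← ENNReal.tsum_mul_left, ← ENNReal.tsum_add]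
  apply ENNReal.tsum_le_tsum
  intro k
  simp only [ContinuousLinearMap.add_apply]
  calc (‖a (e k) + b (e k)‖₊ : ℝ≥0∞)^2 ≤ ((‖a (e k)‖₊ + ‖b (e k)‖₊ : ℝ≥0))^2 := by
        gcongr; exact_mod_cast nnnorm_add_le _ _
    _ ≤ 2 * (‖a (e k)‖₊ : ℝ≥0∞)^2 + 2 * (‖b (e k)‖₊ : ℝ≥0∞)^2 := by
        have hnn : (‖a (e k)‖₊ + ‖b (e k)‖₊)^2 ≤ 2 * ‖a (e k)‖₊^2 + 2 * ‖b (e k)‖₊^2 := by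
          rw [← NNReal.coe_le_coe]
          push_cast
          nlinarith [sq_nonneg ((‖a (e k)‖ : ℝ) - ‖b (e k)‖)]
        exact_mod_cast hnn

lemma norm_sq_decomp {n : ℕ} (proj : Fin n → H →L[ℂ] H)
    (hsa : ∀ i, adjoint (proj i) = proj i)
    (hidem : ∀ i, proj i * proj i = proj i)
    (hsum : ∑ i, proj i = 1) (u : H) : ‖u‖^2 = ∑ i, ‖proj i u‖^2 := by
  have h2 : (inner ℂ u u : ℂ) = ∑ i, (inner ℂ (proj i u) (proj i u) : ℂ) := by
    calc (inner ℂ u u : ℂ) = inner ℂ u ((∑ i, proj i) u) := by rw [hsum]; simp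
      _ = ∑ i, (inner ℂ u (proj i u) : ℂ) := by
          rw [ContinuousLinearMap.sum_apply, inner_sum]
      _ = ∑ i, (inner ℂ (proj i u) (proj i u) : ℂ) := by
          refine Finset.sum_congr rfl (fun i _ => ?_)
          conv_lhs => rw [← hidem i]
          rw [ContinuousLinearMap.mul_apply, ← ContinuousLinearMap.adjoint_inner_left, hsa]
  have h0 : ‖u‖^2 = ((inner ℂ u u : ℂ)).re := by
    rw [inner_self_eq_norm_sq_to_K]; norm_cast
  rw [h0, h2, Complex.re_sum]
  refine Finset.sum_congr rfl (fun i _ => ?_)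
  rw [inner_self_eq_norm_sq_to_K]; norm_cast

lemma hsT_neg (e : HilbertBasis ι ℂ H) (a : H →L[ℂ] H) : hsT e (-a) = hsT e a := by
  unfold hsT
  simp

lemma hsT_rows (e : HilbertBasis ι ℂ H) {n : ℕ} (proj : Fin n → H →L[ℂ] H)
    (hsa : ∀ i, adjoint (proj i) = proj i)
    (hidem : ∀ i, proj i * proj i = proj i)
    (hsum : ∑ i, proj i = 1) (a : H →L[ℂ] H) :
    hsT e a = ∑ i, hsT e (proj i * a) := by
  unfold hsT
  rw [← Summable.tsum_finsetSum (fun i _ => ENNReal.summable)]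
  apply tsum_congr
  intro k
  have h := norm_sq_decomp proj hsa hidem hsum (a (e k))
  have h2 : ENNReal.ofReal (‖a (e k)‖^2) = ENNReal.ofReal (∑ i, ‖proj i (a (e k))‖^2) := by
    rw [h]
  rw [ENNReal.ofReal_sum_of_nonneg (fun i _ => sq_nonneg _)] at h2
  have conv : ∀ (v : H), ENNReal.ofReal (‖v‖^2) = (‖v‖₊ : ℝ≥0∞)^2 := by
    intro v; rw [ENNReal.ofReal_pow (norm_nonneg _), ofReal_norm_eq_coe_nnnorm]
  rw [conv] at h2
  simp only [conv] at h2
  rw [h2]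
  apply Finset.sum_congr rfl
  intro i _
  rw [ContinuousLinearMap.mul_apply]

lemma hsT_cols (e : HilbertBasis ι ℂ H) {n : ℕ} (proj : Fin n → H →L[ℂ] H)
    (hsa : ∀ i, adjoint (proj i) = proj i)
    (hidem : ∀ i, proj i * proj i = proj i)
    (hsum : ∑ i, proj i = 1) (a : H →L[ℂ] H) :
    hsT e a = ∑ j, hsT e (a * proj j) := by
  rw [← hsT_adjoint e a, hsT_rows e proj hsa hidem hsum (adjoint a)]
  apply Finset.sum_congr rfl
  intro j _
  have h : adjoint (a * proj j) = proj j * adjoint a := by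
    rw [show a * proj j = a ∘L proj j from rfl, adjoint_comp, hsa]
    rfl
  rw [← h, hsT_adjoint]

lemma hsT_blocks (e : HilbertBasis ι ℂ H) {n : ℕ} (proj : Fin n → H →L[ℂ] H)
    (hsa : ∀ i, adjoint (proj i) = proj i)
    (hidem : ∀ i, proj i * proj i = proj i)
    (hsum : ∑ i, proj i = 1) (a : H →L[ℂ] H) :
    hsT e a = ∑ i, ∑ j, hsT e (proj i * a * proj j) := by
  rw [hsT_rows e proj hsa hidem hsum a]
  apply Finset.sum_congr rfl
  intro i _
  rw [hsT_cols e proj hsa hidem hsum (proj i * a)]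


lemma hsT_zero (e : HilbertBasis ι ℂ H) : hsT e (0 : H →L[ℂ] H) = 0 := by
  unfold hsT; simp

lemma hsT_mul_right_ne_top (e : HilbertBasis ι ℂ H) (a b : H →L[ℂ] H)
    (h : hsT e a ≠ ∞) : hsT e (a * b) ≠ ∞ := by
  have h1 : hsT e (a * b) = hsT e (adjoint b * adjoint a) := by
    rw [← hsT_adjoint e (a * b)]
    congr 1
    rw [show a * b = a ∘L b from rfl, adjoint_comp]
    rfl
  rw [h1]
  intro hc
  have h2 := hsT_mul_le e (adjoint b) (adjoint a)
  rw [hc, hsT_adjoint] at h2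
  exact ENNReal.mul_ne_top (by simp) h (top_le_iff.mp h2)

lemma hsT_mul_left_ne_top (e : HilbertBasis ι ℂ H) (a b : H →L[ℂ] H)
    (h : hsT e a ≠ ∞) : hsT e (b * a) ≠ ∞ := by
  intro hc
  have h2 := hsT_mul_le e b a
  rw [hc] at h2
  exact (ENNReal.mul_ne_top (by simp : ((‖b‖₊ : ℝ≥0∞))^2 ≠ ∞) h)
    (top_le_iff.mp h2)

lemma hsT_smul_ne_top (e : HilbertBasis ι ℂ H) (c : ℂ) (a : H →L[ℂ] H)
    (h : hsT e a ≠ ∞) : hsT e (c • a) ≠ ∞ := by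
  rw [hsT_smul]
  exact ENNReal.mul_ne_top (by simp) h

lemma hsT_add_ne_top (e : HilbertBasis ι ℂ H) (a b : H →L[ℂ] H)
    (ha : hsT e a ≠ ∞) (hb : hsT e b ≠ ∞) : hsT e (a + b) ≠ ∞ := by
  intro hc
  have h2 := hsT_add_le e a b
  rw [hc] at h2
  have hne : (2 : ℝ≥0∞) * hsT e a + 2 * hsT e b ≠ ∞ := by
    apply ENNReal.add_ne_top.2
    exact ⟨ENNReal.mul_ne_top (by simp) ha, ENNReal.mul_ne_top (by simp) hb⟩
  exact hne (top_le_iff.mp h2)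

lemma hsT_sub_ne_top (e : HilbertBasis ι ℂ H) (a b : H →L[ℂ] H)
    (ha : hsT e a ≠ ∞) (hb : hsT e b ≠ ∞) : hsT e (a - b) ≠ ∞ := by
  rw [sub_eq_add_neg]
  exact hsT_add_ne_top e a (-b) ha (by rw [hsT_neg]; exact hb)

lemma hsT_finsum_ne_top (e : HilbertBasis ι ℂ H) {α : Type*} (s : Finset α)
    (f : α → H →L[ℂ] H) (h : ∀ i ∈ s, hsT e (f i) ≠ ∞) :
    hsT e (∑ i ∈ s, f i) ≠ ∞ := by
  classical
  induction s using Finset.induction_on with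
  | empty => simpa using (by rw [hsT_zero]; simp : hsT e (0 : H →L[ℂ] H) ≠ ∞)
  | insert a s hx ih =>
    rw [Finset.sum_insert hx]
    exact hsT_add_ne_top e _ _ (h _ (Finset.mem_insert_self _ _))
      (ih (fun i hi => h i (Finset.mem_insert_of_mem hi)))

lemma apply_norm_le (e : HilbertBasis ι ℂ H) (a : H →L[ℂ] H)
    (h : Summable fun k => ‖a (e k)‖^2) (v : H) :
    ‖a v‖ ≤ Real.sqrt (∑' k, ‖a (e k)‖^2) * ‖v‖ := by
  set B := Real.sqrt (∑' k, ‖a (e k)‖^2) with hB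
  have hrepr := e.hasSum_repr v
  have hav : HasSum (fun k => (e.repr v k : ℂ) • a (e k)) (a v) := by
    have := hrepr.mapL a
    simpa using this
  have hpar := parseval_hasSum e v
  have hbound : ∀ s : Finset ι, ∑ k ∈ s, ‖(e.repr v k : ℂ) • a (e k)‖ ≤ B * ‖v‖ := by
    intro s
    have hcs := Finset.sum_mul_sq_le_sq_mul_sq s (fun k => ‖(e.repr v k : ℂ)‖) (fun k => ‖a (e k)‖)
    have h1 : ∑ k ∈ s, ‖(e.repr v k : ℂ)‖^2 ≤ ‖v‖^2 := by
      have hre : ∀ k, ‖(e.repr v k : ℂ)‖^2 = ‖(inner ℂ (e k) v : ℂ)‖^2 := by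
        intro k; rw [e.repr_apply_apply]
      simp only [hre]
      exact sum_le_hasSum s (fun k _ => sq_nonneg _) hpar
    have h2 : ∑ k ∈ s, ‖a (e k)‖^2 ≤ ∑' k, ‖a (e k)‖^2 :=
      Summable.sum_le_tsum s (fun k _ => sq_nonneg _) h
    have hnn : 0 ≤ ∑ k ∈ s, ‖(e.repr v k : ℂ)‖ * ‖a (e k)‖ :=
      Finset.sum_nonneg (fun k _ => mul_nonneg (norm_nonneg _) (norm_nonneg _))
    have hfin : (∑ k ∈ s, ‖(e.repr v k : ℂ)‖ * ‖a (e k)‖)^2 ≤ (B * ‖v‖)^2 := by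
      have hBsq : B^2 = ∑' k, ‖a (e k)‖^2 :=
        Real.sq_sqrt (tsum_nonneg (fun k => sq_nonneg _))
      calc (∑ k ∈ s, ‖(e.repr v k : ℂ)‖ * ‖a (e k)‖)^2
          ≤ (∑ k ∈ s, ‖(e.repr v k : ℂ)‖^2) * (∑ k ∈ s, ‖a (e k)‖^2) := hcs
        _ ≤ ‖v‖^2 * (∑' k, ‖a (e k)‖^2) :=
            mul_le_mul h1 h2 (Finset.sum_nonneg (fun k _ => sq_nonneg _)) (sq_nonneg _)
        _ = (B * ‖v‖)^2 := by rw [mul_pow, hBsq]; ring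
    simp only [norm_smul]
    exact (pow_le_pow_iff_left₀ hnn (mul_nonneg (Real.sqrt_nonneg _) (norm_nonneg _))
      two_ne_zero).mp hfin
  have hsummable : Summable (fun k => ‖(e.repr v k : ℂ) • a (e k)‖) :=
    summable_of_sum_le (fun k => norm_nonneg _) hbound
  calc ‖a v‖ = ‖∑' k, (e.repr v k : ℂ) • a (e k)‖ := by rw [hav.tsum_eq]
    _ ≤ ∑' k, ‖(e.repr v k : ℂ) • a (e k)‖ := norm_tsum_le_tsum_norm hsummable
    _ ≤ B * ‖v‖ := Summable.tsum_le_of_sum_le hsummable hbound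

lemma apply_norm_le' (e : HilbertBasis ι ℂ H) (a : H →L[ℂ] H)
    (h : IsHS e a) (v : H) : ‖a v‖ ≤ hsNorm e a * ‖v‖ := by
  have hs := (isHS_iff_summable e a).1 h
  have := apply_norm_le e a hs v
  rwa [show Real.sqrt (∑' k, ‖a (e k)‖^2) = hsNorm e a by
    rw [hsNorm_eq_T, tsum_sq_eq_toReal_T]] at this

theorem commutator_range_finite_spectrum
    (e : HilbertBasis ι ℂ H) (n : ℕ) (hn : 0 < n)
    (lam : Fin n → ℝ) (hlam : Function.Injective lam)
    (proj : Fin n → H →L[ℂ] H)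
    (hsa : ∀ i, adjoint (proj i) = proj i)
    (hidem : ∀ i, proj i * proj i = proj i)
    (horth : ∀ i j, i ≠ j → proj i * proj j = 0)
    (hsum : ∑ i, proj i = 1)
    (A : H →L[ℂ] H) (hAdef : A = ∑ i, ((lam i : ℂ)) • proj i) :
    ({w | ∃ x : H →L[ℂ] H, adjoint x = -x ∧ IsHS e x ∧ w = x * A - A * x} =
      {z : H →L[ℂ] H | adjoint z = z ∧ IsHS e z ∧ ∀ i, proj i * z * proj i = 0}) ∧
    (∀ (zk : ℕ → H →L[ℂ] H) (z : H →L[ℂ] H),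
      (∀ k, zk k ∈ {z : H →L[ℂ] H | adjoint z = z ∧ IsHS e z ∧ ∀ i, proj i * z * proj i = 0}) →
      adjoint z = z → IsHS e z →
      Filter.Tendsto (fun k => hsNorm e (zk k - z)) Filter.atTop (nhds 0) →
      z ∈ {z : H →L[ℂ] H | adjoint z = z ∧ IsHS e z ∧ ∀ i, proj i * z * proj i = 0}) ∧
    (∀ x : H →L[ℂ] H, adjoint x = -x → IsHS e x →
      sInf {d : ℝ | ∃ i j, i ≠ j ∧ d = |lam i - lam j|} *
          hsNorm e (x - ∑ i, proj i * x * proj i) ≤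
        hsNorm e (x * A - A * x)) := by
  classical
  have hstar : ∀ a : H →L[ℂ] H, adjoint a = star a := fun a =>
    (ContinuousLinearMap.star_eq_adjoint a).symm
  have hpstar : ∀ i, star (proj i) = proj i := fun i => by rw [← hstar]; exact hsa i
  have hAp : ∀ i, A * proj i = ((lam i : ℂ)) • proj i := by
    intro i
    rw [hAdef, Finset.sum_mul, Finset.sum_eq_single i]
    · rw [smul_mul_assoc, hidem i]
    · intro j _ hj
      rw [smul_mul_assoc, horth j i hj, smul_zero]
    · intro hmem; exact absurd (Finset.mem_univ i) hmem
  have hpA : ∀ i, proj i * A = ((lam i : ℂ)) • proj i := by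
    intro i
    rw [hAdef, Finset.mul_sum, Finset.sum_eq_single i]
    · rw [mul_smul_comm, hidem i]
    · intro j _ hj
      rw [mul_smul_comm, horth i j (Ne.symm hj), smul_zero]
    · intro hmem; exact absurd (Finset.mem_univ i) hmem
  have hAsa : star A = A := by
    rw [hAdef, star_sum]
    refine Finset.sum_congr rfl fun i _ => ?_
    rw [star_smul, hpstar i, Complex.star_def, Complex.conj_ofReal]
  refine ⟨?_, ?_, ?_⟩
  · -- part 1
    ext w
    constructor
    · rintro ⟨x, hx, hxHS, rfl⟩
      rw [hstar] at hx
      refine ⟨?_, ?_, ?_⟩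
      · rw [hstar, star_sub, star_mul, star_mul, hAsa, hx]
        simp only [mul_neg, neg_mul, sub_neg_eq_add, neg_add_eq_sub]
      · rw [isHS_iff_T] at hxHS ⊢
        exact hsT_sub_ne_top e _ _ (hsT_mul_right_ne_top e _ _ hxHS)
          (hsT_mul_left_ne_top e _ _ hxHS)
      · intro i
        calc proj i * (x * A - A * x) * proj i
            = proj i * (x * (A * proj i)) - proj i * (A * (x * proj i)) := by
              simp only [mul_sub, sub_mul, mul_assoc]
          _ = 0 := by
              rw [hAp i, ← mul_assoc (proj i) A (x * proj i), hpA i]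
              simp only [mul_smul_comm, smul_mul_assoc]
              rw [sub_self]
    · rintro ⟨hz, hzHS, hblk⟩
      rw [hstar] at hz
      set c : Fin n → Fin n → ℝ := fun i j => if i = j then 0 else (lam j - lam i)⁻¹ with hc
      set x : H →L[ℂ] H := ∑ i, ∑ j, ((c i j : ℝ) : ℂ) • (proj i * w * proj j) with hxdef
      have hcskew : ∀ i j, c j i = - c i j := by
        intro i j
        by_cases hij : i = j
        · subst hij; simp [hc]
        · simp only [hc]
          rw [if_neg (Ne.symm hij), if_neg hij, ← neg_sub (lam j) (lam i), inv_neg]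
      refine ⟨x, ?_, ?_, ?_⟩
      · -- skew-adjoint
        have hterm : ∀ i j : Fin n, star (((c i j : ℝ) : ℂ) • (proj i * w * proj j))
            = ((c i j : ℝ) : ℂ) • (proj j * w * proj i) := by
          intro i j
          rw [star_smul, Complex.star_def, Complex.conj_ofReal, star_mul, star_mul,
            hpstar, hpstar, hz, ← mul_assoc]
        rw [hstar, hxdef]
        simp only [star_sum, hterm]
        rw [Finset.sum_comm]
        have hneg : -(∑ i, ∑ j, ((c i j : ℝ) : ℂ) • (proj i * w * proj j))
            = ∑ i, ∑ j, -(((c i j : ℝ) : ℂ) • (proj i * w * proj j)) := by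
          simp
        rw [hneg]
        refine Finset.sum_congr rfl fun i _ => ?_
        refine Finset.sum_congr rfl fun j _ => ?_
        rw [hcskew i j]
        push_cast
        rw [neg_smul]
      · -- IsHS x
        rw [isHS_iff_T]
        apply hsT_finsum_ne_top
        intro i _
        apply hsT_finsum_ne_top
        intro j _
        apply hsT_smul_ne_top
        rw [mul_assoc]
        apply hsT_mul_left_ne_top
        apply hsT_mul_right_ne_top
        exact (isHS_iff_T e w).1 hzHS
      · -- w = x A - A x
        have hcoeff : ∀ i j : Fin n, c i j * (lam j - lam i) = if i = j then 0 else 1 := by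
          intro i j
          by_cases hij : i = j
          · subst hij; simp [hc]
          · simp only [hc, if_neg hij]
            exact inv_mul_cancel₀ (sub_ne_zero.2 fun h => hij (hlam h).symm)
        have hxA : x * A = ∑ i, ∑ j, ((c i j * lam j : ℝ) : ℂ) • (proj i * w * proj j) := by
          rw [hxdef, Finset.sum_mul]
          refine Finset.sum_congr rfl fun i _ => ?_
          rw [Finset.sum_mul]
          refine Finset.sum_congr rfl fun j _ => ?_
          rw [smul_mul_assoc, mul_assoc, hpA j, mul_smul_comm, smul_smul]
          congr 1
          push_cast
          ring
        have hAx : A * x = ∑ i, ∑ j, ((lam i * c i j : ℝ) : ℂ) • (proj i * w * proj j) := by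
          rw [hxdef, Finset.mul_sum]
          refine Finset.sum_congr rfl fun i _ => ?_
          rw [Finset.mul_sum]
          refine Finset.sum_congr rfl fun j _ => ?_
          rw [mul_smul_comm, ← mul_assoc, ← mul_assoc, hAp i, smul_mul_assoc,
            smul_mul_assoc, smul_smul]
          congr 1
          push_cast
          ring
        have hfinal : ∑ i, (∑ j, ((c i j * lam j : ℝ) : ℂ) • (proj i * w * proj j)
              - ∑ j, ((lam i * c i j : ℝ) : ℂ) • (proj i * w * proj j))
            = w := by
          calc ∑ i, (∑ j, ((c i j * lam j : ℝ) : ℂ) • (proj i * w * proj j)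
                - ∑ j, ((lam i * c i j : ℝ) : ℂ) • (proj i * w * proj j))
              = ∑ i, ∑ j, proj i * w * proj j := by
                refine Finset.sum_congr rfl fun i _ => ?_
                rw [← Finset.sum_sub_distrib]
                refine Finset.sum_congr rfl fun j _ => ?_
                rw [← sub_smul]
                by_cases hij : i = j
                · subst hij
                  rw [hblk i, smul_zero]
                · have h1 : c i j * (lam j - lam i) = 1 := by
                    rw [hcoeff i j, if_neg hij]
                  have hsc : ((c i j * lam j : ℝ) : ℂ) - ((lam i * c i j : ℝ) : ℂ) = 1 := by
                    norm_cast
                    linear_combination h1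
                  rw [hsc, one_smul]
            _ = w := by
                calc ∑ i, ∑ j, proj i * w * proj j
                    = ∑ i, (proj i * w) * ∑ j, proj j := by
                      refine Finset.sum_congr rfl fun i _ => ?_
                      rw [← Finset.mul_sum]
                  _ = ∑ i, proj i * w := by
                      rw [hsum]
                      simp
                  _ = (∑ i, proj i) * w := by rw [Finset.sum_mul]
                  _ = w := by rw [hsum, one_mul]
        rw [hxA, hAx, ← Finset.sum_sub_distrib]
        exact hfinal.symm
  · -- part 2
    intro zk z hzk hzsa hzHS htend
    refine ⟨hzsa, hzHS, ?_⟩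
    intro i
    have hdHS : ∀ k, hsT e (zk k - z) ≠ ∞ := fun k =>
      hsT_sub_ne_top e _ _ ((isHS_iff_T e _).1 (hzk k).2.1) ((isHS_iff_T e z).1 hzHS)
    have heq : ∀ k, proj i * z * proj i = -(proj i * (zk k - z) * proj i) := by
      intro k
      have h0 := (hzk k).2.2 i
      rw [mul_sub, sub_mul, h0, zero_sub, neg_neg]
    ext v
    have hb : ∀ k, ‖(proj i * z * proj i) v‖
        ≤ ‖proj i‖ * (hsNorm e (zk k - z) * ‖proj i v‖) := by
      intro k
      rw [heq k]
      calc ‖(-(proj i * (zk k - z) * proj i)) v‖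
          = ‖proj i ((zk k - z) (proj i v))‖ := by
            simp [ContinuousLinearMap.mul_apply, norm_sub_rev]
        _ ≤ ‖proj i‖ * ‖(zk k - z) (proj i v)‖ := (proj i).le_opNorm _
        _ ≤ ‖proj i‖ * (hsNorm e (zk k - z) * ‖proj i v‖) := by
            apply mul_le_mul_of_nonneg_left _ (norm_nonneg _)
            exact apply_norm_le' e _ ((isHS_iff_T e _).2 (hdHS k)) _
    have hlim : Filter.Tendsto (fun k => ‖proj i‖ * (hsNorm e (zk k - z) * ‖proj i v‖))
        Filter.atTop (nhds 0) := by
      have h1 := (htend.mul_const (‖proj i v‖)).const_mul (‖proj i‖)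
      simpa using h1
    have hle : ‖(proj i * z * proj i) v‖ ≤ 0 := ge_of_tendsto' hlim hb
    have h0 : (proj i * z * proj i) v = 0 := norm_le_zero_iff.1 hle
    simpa using h0
  · -- part 3
    intro x hxs hxHS
    set g := sInf {d : ℝ | ∃ i j, i ≠ j ∧ d = |lam i - lam j|} with hg
    have hbdd : BddBelow {d : ℝ | ∃ i j, i ≠ j ∧ d = |lam i - lam j|} :=
      ⟨0, by rintro d ⟨i', j', _, rfl⟩; exact abs_nonneg _⟩
    have hg0 : 0 ≤ g := Real.sInf_nonneg (by rintro d ⟨i', j', _, rfl⟩; exact abs_nonneg _)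
    have hTx : hsT e x ≠ ∞ := (isHS_iff_T e x).1 hxHS
    set y : H →L[ℂ] H := x - ∑ i, proj i * x * proj i with hy
    set wop : H →L[ℂ] H := x * A - A * x with hw
    have hTblk : ∀ i j : Fin n, hsT e (proj i * x * proj j) ≠ ∞ := fun i j => by
      rw [mul_assoc]
      exact hsT_mul_left_ne_top e _ _ (hsT_mul_right_ne_top e _ _ hTx)
    have hTy : hsT e y ≠ ∞ :=
      hsT_sub_ne_top e _ _ hTx (hsT_finsum_ne_top e _ _ (fun i _ => hTblk i i))
    have hTw : hsT e wop ≠ ∞ :=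
      hsT_sub_ne_top e _ _ (hsT_mul_right_ne_top e _ _ hTx) (hsT_mul_left_ne_top e _ _ hTx)
    have hwblk : ∀ i j : Fin n,
        proj i * wop * proj j = (((lam j - lam i : ℝ)) : ℂ) • (proj i * x * proj j) := by
      intro i j
      calc proj i * (x * A - A * x) * proj j
          = proj i * (x * (A * proj j)) - proj i * (A * (x * proj j)) := by
            simp only [mul_sub, sub_mul, mul_assoc]
        _ = ((lam j : ℂ)) • (proj i * (x * proj j))
            - ((lam i : ℂ)) • (proj i * (x * proj j)) := by
            rw [hAp j, ← mul_assoc (proj i) A (x * proj j), hpA i]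
            simp only [mul_smul_comm, smul_mul_assoc]
        _ = (((lam j - lam i : ℝ)) : ℂ) • (proj i * x * proj j) := by
            rw [← sub_smul, mul_assoc]
            norm_cast
    have hsum_blk : ∀ i j : Fin n,
        ∑ k, proj i * (proj k * x * proj k) * proj j = proj i * x * (proj i * proj j) := by
      intro i j
      rw [Finset.sum_eq_single i]
      · simp only [← mul_assoc]
        rw [hidem i, mul_assoc]
      · intro k _ hk
        simp only [← mul_assoc]
        rw [horth i k (Ne.symm hk)]
        simp
      · intro hmem; exact absurd (Finset.mem_univ i) hmem
    have hyblk : ∀ i j : Fin n,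
        proj i * y * proj j = if i = j then 0 else proj i * x * proj j := by
      intro i j
      rw [hy, mul_sub, sub_mul, Finset.mul_sum, Finset.sum_mul, hsum_blk i j]
      by_cases hij : i = j
      · subst hij
        rw [if_pos rfl, hidem i, mul_assoc, sub_self]
      · rw [if_neg hij, horth i j hij, mul_zero, sub_zero]
    have key : ENNReal.ofReal (g^2) * hsT e y ≤ hsT e wop := by
      rw [hsT_blocks e proj hsa hidem hsum y, hsT_blocks e proj hsa hidem hsum wop,
        Finset.mul_sum]
      apply Finset.sum_le_sum
      intro i _
      rw [Finset.mul_sum]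
      apply Finset.sum_le_sum
      intro j _
      rw [hyblk i j, hwblk i j, hsT_smul]
      by_cases hij : i = j
      · rw [if_pos hij, hsT_zero, mul_zero]
        exact zero_le
      · rw [if_neg hij]
        have hgle : g ≤ |lam i - lam j| := csInf_le hbdd ⟨i, j, hij, rfl⟩
        have hnn : ((‖((lam j - lam i : ℝ) : ℂ)‖₊ : ℝ≥0∞))^2
            = ENNReal.ofReal ((lam j - lam i)^2) := by
          rw [Complex.nnnorm_real, ← ofReal_norm_eq_coe_nnnorm,
            ← ENNReal.ofReal_pow (norm_nonneg _)]
          congr 1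
          rw [Real.norm_eq_abs, sq_abs]
        rw [hnn]
        apply mul_le_mul_of_nonneg_right _ (zero_le)
        apply ENNReal.ofReal_le_ofReal
        calc g^2 ≤ |lam j - lam i|^2 := by
              apply pow_le_pow_left₀ hg0
              rw [abs_sub_comm]
              exact hgle
          _ = (lam j - lam i)^2 := sq_abs _
    have htoReal : g^2 * (hsT e y).toReal ≤ (hsT e wop).toReal := by
      have h1 := ENNReal.toReal_mono hTw key
      rwa [ENNReal.toReal_mul, ENNReal.toReal_ofReal (sq_nonneg g)] at h1
    rw [hsNorm_eq_T, hsNorm_eq_T]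
    calc g * Real.sqrt (hsT e y).toReal = Real.sqrt (g^2 * (hsT e y).toReal) := by
          rw [Real.sqrt_mul (sq_nonneg g), Real.sqrt_sq hg0]
      _ ≤ Real.sqrt (hsT e wop).toReal := Real.sqrt_le_sqrt htoReal
end
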